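/- Let R be a commutative local ring, e ≥ 2 an integer, A := R[X]/(X^e), π the image of X, E a finite free A-module of rank h₁, and let 0 = F^{[0]} ⊆ F^{[1]} ⊆ ⋯ ⊆ F^{[e]} be a Pappas–Rapoport filtration of rank d₁ on E, with 0 < d₁ < h₁. For 1 ≤ j ≤ e define F^{[e+j]} := {x ∈ E : π^j·x ∈ F^{[e−j]}}. Then: (i) F^{[e]} ⊆ F^{[e+1]} ⊆ ⋯ ⊆ F^{[2e−1]} ⊆ F^{[2e]} = E; (ii) each F^{[e+j]} is a direct summand of E as an R-module and is finite free over R of rank j·h₁ + (e−j)·d₁; (iii) π·F^{[e+j]} ⊆ F^{[e+j−1]} for all 1 ≤ j ≤ e; (iv) each quotient F^{[e+j]}/F^{[e+j−1]} is a finite free R-module of rank h₁ − d₁ (where F^{[e+0]} := F^{[e]}). (In other words, the Pappas–Rapoport filtration on the module of invariant differentials of a p-divisible group G canonically induces a Pappas–Rapoport filtration, with d₁ replaced by h₁ − d₁, for the dual p-divisible group G^D.) -/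

import Mathlib

/-- The ring `A = R[X]/(X^e)`. -/
abbrev TruncPoly (R : Type*) [CommRing R] (e : ℕ) : Type _ :=
  Polynomial R ⧸ Ideal.span {(Polynomial.X : Polynomial R) ^ e}

/-- The image `π` of `X` in `A = R[X]/(X^e)`. -/
noncomputable def piX (R : Type*) [CommRing R] (e : ℕ) : TruncPoly R e :=
  Ideal.Quotient.mk _ Polynomial.X

/-- Multiplication by `π^k`, as an `R`-linear endomorphism of a module over `R[X]/(X^e)`. -/
noncomputable def mulPi (R : Type*) [CommRing R] (e : ℕ)
    (E : Type*) [AddCommGroup E] [Module (TruncPoly R e) E] [Module R E]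
    [IsScalarTower R (TruncPoly R e) E] (k : ℕ) : E →ₗ[R] E :=
  (LinearMap.lsmul (TruncPoly R e) E (piX R e ^ k)).restrictScalars R

/-- A Pappas–Rapoport filtration of rank `d₁` on a module `E` over `A = R[X]/(X^e)`:
a chain of `R`-submodules `0 = F^{[0]} ⊆ F^{[1]} ⊆ ⋯ ⊆ F^{[e]}` of `E` such that each
`F^{[j]}` is an `R`-module direct summand of `E`, each quotient `F^{[j]}/F^{[j-1]}` is a
finite free `R`-module of rank `d₁`, and `π·F^{[j]} ⊆ F^{[j-1]}` for `1 ≤ j ≤ e`. -/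
def IsPRFiltration (R : Type*) [CommRing R] (e : ℕ)
    (E : Type*) [AddCommGroup E] [Module (TruncPoly R e) E] [Module R E]
    [IsScalarTower R (TruncPoly R e) E] (d₁ : ℕ) (F : ℕ → Submodule R E) : Prop :=
  F 0 = ⊥ ∧
  (∀ j < e, F j ≤ F (j + 1)) ∧
  (∀ j ≤ e, ∃ q : Submodule R E, IsCompl (F j) q) ∧
  (∀ j < e,
    Module.Finite R (↥(F (j + 1)) ⧸ (F j).comap (F (j + 1)).subtype) ∧
    Module.Free R (↥(F (j + 1)) ⧸ (F j).comap (F (j + 1)).subtype) ∧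
    Module.finrank R (↥(F (j + 1)) ⧸ (F j).comap (F (j + 1)).subtype) = d₁) ∧
  (∀ j < e, ∀ x ∈ F (j + 1), piX R e • x ∈ F j)

/-- The member `F^{[e+j]} := {x ∈ E : π^j·x ∈ F^{[e-j]}}` of the extended
(dual) Pappas–Rapoport filtration. -/
noncomputable def PRext (R : Type*) [CommRing R] (e : ℕ)
    (E : Type*) [AddCommGroup E] [Module (TruncPoly R e) E] [Module R E]
    [IsScalarTower R (TruncPoly R e) E] (F : ℕ → Submodule R E) (j : ℕ) : Submodule R E :=
  (F (e - j)).comap (mulPi R e E j)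

/-- The submodule `F'^{[j]} := {x ∈ E : π·x ∈ F^{[j]}}`. -/
noncomputable def PRdiv (R : Type*) [CommRing R] (e : ℕ)
    (E : Type*) [AddCommGroup E] [Module (TruncPoly R e) E] [Module R E]
    [IsScalarTower R (TruncPoly R e) E] (F : ℕ → Submodule R E) (j : ℕ) : Submodule R E :=
  (F j).comap (mulPi R e E 1)



section Aux
variable {R : Type*} [CommRing R] {M N : Type*} [AddCommGroup M] [Module R M]
  [AddCommGroup N] [Module R N]

lemma aux_isCompl_ker_range (g : M →ₗ[R] N) (s : N →ₗ[R] M) (h : ∀ y, g (s y) = y) :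
    IsCompl (LinearMap.ker g) (LinearMap.range s) := by
  constructor
  · rw [disjoint_iff_inf_le]
    rintro x ⟨hx1, y, rfl⟩
    have hy : y = 0 := by simpa [h y] using hx1
    simp [hy]
  · rw [codisjoint_iff_le_sup]
    intro x _
    have hk : x - s (g x) ∈ LinearMap.ker g := by simp [h]
    exact Submodule.mem_sup.2 ⟨x - s (g x), hk, s (g x), ⟨_, rfl⟩, by abel⟩

lemma aux_isCompl_inf_sup {a b c d : Submodule R M} (hab : IsCompl a b) (hcd : IsCompl c d)
    (hca : c ≤ a) : IsCompl (d ⊓ a) (c ⊔ b) := by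
  constructor
  · rw [disjoint_iff_inf_le]
    rintro x ⟨⟨hxd, hxa⟩, hx2⟩
    obtain ⟨y, hy, z, hz, rfl⟩ := Submodule.mem_sup.1 hx2
    have hza : z ∈ a := by
      have : y + z - y ∈ a := Submodule.sub_mem _ hxa (hca hy)
      simpa using this
    have hz0 : z = 0 := (Submodule.disjoint_def.1 hab.disjoint) z hza hz
    subst hz0
    have hy0 : y = 0 := (Submodule.disjoint_def.1 hcd.disjoint) y hy (by simpa using hxd)
    simp [hy0]
  · rw [codisjoint_iff_le_sup]
    intro x _
    obtain ⟨p, hp, q, hq, rfl⟩ := Submodule.mem_sup.1 (hab.sup_eq_top ▸ Submodule.mem_top (x := x))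
    obtain ⟨u, hu, v, hv, rfl⟩ := Submodule.mem_sup.1 (hcd.sup_eq_top ▸ Submodule.mem_top (x := p))
    have hva : v ∈ a := by
      have : u + v - u ∈ a := Submodule.sub_mem _ hp (hca hu)
      simpa using this
    refine Submodule.mem_sup.2 ⟨v, ⟨hv, hva⟩, u + q, Submodule.mem_sup.2 ⟨u, hu, q, hq, rfl⟩, by abel⟩

lemma aux_isCompl_comap_subtype {p q m : Submodule R M} (h : IsCompl p q) (hpm : p ≤ m) :
    IsCompl (p.comap m.subtype) ((q ⊓ m).comap m.subtype) := by
  constructor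
  · rw [disjoint_iff_inf_le]
    rintro ⟨x, hxm⟩ ⟨hx1, hx2, -⟩
    have : x = 0 := (Submodule.disjoint_def.1 h.disjoint) x hx1 hx2
    simpa [Submodule.mem_bot] using this
  · rw [codisjoint_iff_le_sup]
    rintro ⟨x, hxm⟩ -
    obtain ⟨y, hy, z, hz, hyz⟩ := Submodule.mem_sup.1 (h.sup_eq_top ▸ Submodule.mem_top (x := x))
    have hzm : z ∈ m := by
      have : y + z - y ∈ m := Submodule.sub_mem _ (hyz ▸ hxm) (hpm hy)
      simpa using this
    refine Submodule.mem_sup.2 ⟨⟨y, hpm hy⟩, hy, ⟨z, hzm⟩, ⟨hz, hzm⟩, ?_⟩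
    ext; simpa using hyz

lemma aux_sup_inf_of_isCompl {p q m : Submodule R M} (h : IsCompl p q) (hpm : p ≤ m) :
    p ⊔ (q ⊓ m) = m := by
  have := sup_inf_assoc_of_le (x := p) q hpm
  rw [h.sup_eq_top, top_inf_eq] at this
  exact this.symm

lemma aux_summand_finite_free [IsLocalRing R] [Module.Finite R M] [Module.Free R M]
    {p q : Submodule R M} (h : IsCompl p q) :
    Module.Finite R p ∧ Module.Free R p := by
  have hsurj : Function.Surjective (p.projectionOnto q h) := fun x =>
    ⟨(x : M), Submodule.projectionOnto_apply_left h x⟩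
  have hfin : Module.Finite R p := Module.Finite.of_surjective _ hsurj
  have hproj : Module.Projective R p :=
    Module.Projective.of_split p.subtype (p.projectionOnto q h)
      (by ext x; simp)
  have : Module.FinitePresentation R p := Module.finitePresentation_of_projective _ _
  exact ⟨hfin, Module.free_of_flat_of_isLocalRing⟩

lemma aux_finrank_of_isCompl [IsLocalRing R] [Module.Finite R M] [Module.Free R M]
    {p q : Submodule R M} (h : IsCompl p q) :
    Module.finrank R M = Module.finrank R p + Module.finrank R q := by
  obtain ⟨hf1, hf2⟩ := aux_summand_finite_free h
  obtain ⟨hg1, hg2⟩ := aux_summand_finite_free h.symm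
  rw [← (Submodule.prodEquivOfIsCompl p q h).finrank_eq, Module.finrank_prod]

end Aux


section Aux2
variable {R : Type*} [CommRing R] {M : Type*} [AddCommGroup M] [Module R M]

lemma aux_finrank_sandwich [IsLocalRing R] [Module.Finite R M] [Module.Free R M]
    {p m q qm : Submodule R M} (hpm : p ≤ m) (hq : IsCompl p q) (hm : IsCompl m qm) :
    Module.finrank R ↥m = Module.finrank R ↥p + Module.finrank R ↥(q ⊓ m) := by
  obtain ⟨hmfin, hmfree⟩ := aux_summand_finite_free hm
  have c := aux_isCompl_comap_subtype hq hpm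
  calc Module.finrank R ↥m
      = Module.finrank R ↥(p.comap m.subtype) + Module.finrank R ↥((q ⊓ m).comap m.subtype) :=
        aux_finrank_of_isCompl c
    _ = Module.finrank R ↥p + Module.finrank R ↥(q ⊓ m) := by
        rw [(Submodule.comapSubtypeEquivOfLe hpm).finrank_eq,
          (Submodule.comapSubtypeEquivOfLe (inf_le_right : q ⊓ m ≤ m)).finrank_eq]

lemma aux_quot_package [IsLocalRing R] [Module.Finite R M] [Module.Free R M]
    {p m q qm : Submodule R M} (hpm : p ≤ m) (hq : IsCompl p q) (hm : IsCompl m qm) :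
    Module.Finite R (↥m ⧸ p.comap m.subtype) ∧ Module.Free R (↥m ⧸ p.comap m.subtype) ∧
    Module.finrank R ↥m = Module.finrank R ↥p + Module.finrank R (↥m ⧸ p.comap m.subtype) := by
  have c := aux_isCompl_comap_subtype hq hpm
  have equiv : (↥m ⧸ p.comap m.subtype) ≃ₗ[R] ↥(q ⊓ m) :=
    (Submodule.quotientEquivOfIsCompl _ _ c).trans (Submodule.comapSubtypeEquivOfLe inf_le_right)
  have hsummand : IsCompl (q ⊓ m) (p ⊔ qm) := aux_isCompl_inf_sup hm hq hpm
  obtain ⟨hfin, hfree⟩ := aux_summand_finite_free hsummand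
  refine ⟨Module.Finite.equiv equiv.symm, Module.Free.of_equiv equiv.symm, ?_⟩
  rw [equiv.finrank_eq]
  exact aux_finrank_sandwich hpm hq hm

end Aux2

noncomputable section ModelA

variable (R : Type*) [CommRing R] (e : ℕ)

lemma piX_pow (n : ℕ) :
    piX R e ^ n = Ideal.Quotient.mk _ (Polynomial.X ^ n) := by
  simp [piX, map_pow]

lemma piX_pow_eq_zero {n : ℕ} (hn : e ≤ n) : piX R e ^ n = 0 := by
  rw [piX_pow, Ideal.Quotient.eq_zero_iff_mem]
  exact Ideal.mem_span_singleton.2 (pow_dvd_pow _ hn)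

lemma truncPoly_nontrivial [Nontrivial R] (he : 1 ≤ e) : Nontrivial (TruncPoly R e) := by
  refine Ideal.Quotient.nontrivial_iff.mpr ?_
  rw [Ne, Ideal.eq_top_iff_one, Ideal.mem_span_singleton']
  rintro ⟨a, ha⟩
  have h2 := congrArg (Polynomial.eval 0) ha
  simp [zero_pow (by omega : e ≠ 0)] at h2

variable [Nontrivial R]

noncomputable def basisA : Module.Basis (Fin e) R (TruncPoly R e) :=
  (AdjoinRoot.powerBasis' (Polynomial.monic_X_pow e)).basis.reindex
    (finCongr (by simp [AdjoinRoot.powerBasis'_dim]))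

lemma basisA_apply (i : Fin e) : basisA R e i = piX R e ^ (i : ℕ) :=
  ((AdjoinRoot.powerBasis' (Polynomial.monic_X_pow (R := R) e)).basis.reindex_apply _ i).trans
    (((AdjoinRoot.powerBasis' (Polynomial.monic_X_pow e)).basis_eq_pow _).trans rfl)


/-- The shift operator on `Fin e → R` modeling multiplication by `π^j`. -/
def shiftA (j : ℕ) : (Fin e → R) →ₗ[R] (Fin e → R) where
  toFun c := fun m => if h : j ≤ (m : ℕ) then c ⟨(m : ℕ) - j, lt_of_le_of_lt (Nat.sub_le _ _) m.isLt⟩ else 0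
  map_add' x y := by funext m; by_cases h : j ≤ (m : ℕ) <;> simp [h]
  map_smul' c x := by funext m; by_cases h : j ≤ (m : ℕ) <;> simp [h]

lemma shiftA_apply (j : ℕ) (c : Fin e → R) (m : Fin e) :
    shiftA R e j c m = if h : j ≤ (m : ℕ) then
      c ⟨(m : ℕ) - j, lt_of_le_of_lt (Nat.sub_le _ _) m.isLt⟩ else 0 := rfl

lemma basisA_equivFun_shift (j : ℕ) (a : TruncPoly R e) :
    (basisA R e).equivFun (piX R e ^ j * a) = shiftA R e j ((basisA R e).equivFun a) := by
  have key : ((basisA R e).equivFun.toLinearMap.comp (mulPi R e (TruncPoly R e) j))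
      = (shiftA R e j).comp (basisA R e).equivFun.toLinearMap := by
    apply (basisA R e).ext
    intro i
    have happ : mulPi R e (TruncPoly R e) j (basisA R e i) = piX R e ^ ((i : ℕ) + j) := by
      simp only [mulPi, LinearMap.coe_restrictScalars, LinearMap.lsmul_apply, smul_eq_mul,
        basisA_apply, ← pow_add]
      ring
    simp only [LinearMap.coe_comp, Function.comp_apply, LinearEquiv.coe_coe, happ]
    funext m
    rw [shiftA_apply, Module.Basis.equivFun_self]
    by_cases hije : (i : ℕ) + j < e
    · have h1 : piX R e ^ ((i : ℕ) + j) = basisA R e ⟨(i : ℕ) + j, hije⟩ := (basisA_apply R e ⟨(i : ℕ) + j, hije⟩).symm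
      rw [h1, Module.Basis.equivFun_self]
      by_cases hjm : j ≤ (m : ℕ)
      · rw [dif_pos hjm]
        by_cases heq : (⟨(i : ℕ) + j, hije⟩ : Fin e) = m
        · rw [if_pos heq, if_pos]
          have : (i : ℕ) + j = (m : ℕ) := by simpa using congrArg Fin.val heq
          exact Fin.ext (by simp; omega)
        · rw [if_neg heq, if_neg]
          intro hcon
          apply heq
          have : (i : ℕ) = (m : ℕ) - j := by simpa using congrArg Fin.val hcon
          exact Fin.ext (by simp; omega)
      · rw [dif_neg hjm, if_neg]
        intro hcon
        have : (i : ℕ) + j = (m : ℕ) := by simpa using congrArg Fin.val hcon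
        omega
    · have h0 : piX R e ^ ((i : ℕ) + j) = 0 := piX_pow_eq_zero R e (by omega)
      rw [h0, map_zero]
      by_cases hjm : j ≤ (m : ℕ)
      · rw [dif_pos hjm, if_neg]
        · rfl
        · intro hcon
          have : (i : ℕ) = (m : ℕ) - j := by simpa using congrArg Fin.val hcon
          have := m.isLt
          omega
      · rw [dif_neg hjm]; rfl
  have h2 := congrArg (fun f => f a) (congrArg (fun g => g.toFun) key)
  simpa [mulPi] using h2


section ModelW
variable (κ : Type*)

/-- Coordinate submodule: coordinates `< t` vanish. -/
def Tsub (t : ℕ) : Submodule R (κ → Fin e → R) where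
  carrier := {f | ∀ s (i : Fin e), (i : ℕ) < t → f s i = 0}
  add_mem' := fun {f g} hf hg s i hi => by
    simp only [Pi.add_apply, hf s i hi, hg s i hi, add_zero]
  zero_mem' := fun s i _ => rfl
  smul_mem' := fun c {f} hf s i hi => by simp only [Pi.smul_apply, hf s i hi, smul_zero]

/-- Coordinate submodule: coordinates `≥ t` vanish. -/
def Tsub' (t : ℕ) : Submodule R (κ → Fin e → R) where
  carrier := {f | ∀ s (i : Fin e), t ≤ (i : ℕ) → f s i = 0}
  add_mem' := fun {f g} hf hg s i hi => by
    simp only [Pi.add_apply, hf s i hi, hg s i hi, add_zero]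
  zero_mem' := fun s i _ => rfl
  smul_mem' := fun c {f} hf s i hi => by simp only [Pi.smul_apply, hf s i hi, smul_zero]

lemma mem_Tsub {t : ℕ} {f : κ → Fin e → R} :
    f ∈ Tsub R e κ t ↔ ∀ s (i : Fin e), (i : ℕ) < t → f s i = 0 := Iff.rfl

lemma isCompl_Tsub (t : ℕ) : IsCompl (Tsub R e κ t) (Tsub' R e κ t) := by
  constructor
  · rw [disjoint_iff_inf_le]
    rintro f ⟨h1, h2⟩
    have : f = 0 := by
      funext s i
      by_cases hi : (i : ℕ) < t
      · exact h1 s i hi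
      · exact h2 s i (by omega)
    simp [this]
  · rw [codisjoint_iff_le_sup]
    intro f _
    refine Submodule.mem_sup.2 ⟨fun s i => if (i : ℕ) < t then 0 else f s i,
      fun s i hi => by simp [hi], fun s i => if (i : ℕ) < t then f s i else 0,
      fun s i hi => by simp [Nat.not_lt.2 hi], ?_⟩
    funext s i
    by_cases hi : (i : ℕ) < t <;> simp [hi]

/-- `Tsub` is free of the expected rank. -/
noncomputable def TsubEquiv (t : ℕ) (ht : t ≤ e) :
    Tsub R e κ t ≃ₗ[R] (κ × Fin (e - t) → R) where
  toFun f := fun p => (f : κ → Fin e → R) p.1 ⟨t + (p.2 : ℕ), by have := p.2.isLt; omega⟩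
  map_add' f g := by funext p; simp
  map_smul' c f := by funext p; simp
  invFun g := ⟨fun s i => if h : t ≤ (i : ℕ) then g (s, ⟨(i : ℕ) - t, by have := i.isLt; omega⟩)
      else 0, fun s i hi => dif_neg (by omega)⟩
  left_inv f := by
    apply Subtype.ext
    funext s i
    dsimp only
    by_cases hi : t ≤ (i : ℕ)
    · rw [dif_pos hi]
      exact congrArg (f.1 s) (Fin.ext (show t + ((i : ℕ) - t) = (i : ℕ) by omega))
    · rw [dif_neg hi]
      exact (f.2 s i (by omega)).symm
  right_inv g := by
    funext p
    dsimp only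
    rw [dif_pos (Nat.le_add_right t (p.2 : ℕ))]
    exact congrArg g (Prod.ext rfl (Fin.ext (by simp)))

/-- The componentwise shift on `κ → Fin e → R`. -/
def modelShift (j : ℕ) : (κ → Fin e → R) →ₗ[R] (κ → Fin e → R) :=
  LinearMap.pi (fun s => (shiftA R e j).comp (LinearMap.proj s))

lemma modelShift_apply (j : ℕ) (f : κ → Fin e → R) (s : κ) :
    modelShift R e κ j f s = shiftA R e j (f s) := rfl

lemma ker_modelShift (j : ℕ) (hj : j ≤ e) :
    LinearMap.ker (modelShift R e κ j) = Tsub R e κ (e - j) := by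
  ext f
  simp only [LinearMap.mem_ker, mem_Tsub]
  constructor
  · intro h s i hi
    have h2 := congrFun (congrFun h s) ⟨(i : ℕ) + j, by omega⟩
    simp only [modelShift_apply, shiftA_apply, Pi.zero_apply, Fin.val_mk] at h2
    rw [dif_pos (Nat.le_add_left j ((i : ℕ)))] at h2
    have h3 : (⟨(i : ℕ) + j - j, lt_of_le_of_lt (Nat.sub_le _ _) (by omega)⟩ : Fin e) = i :=
      Fin.ext (by simp)
    rwa [h3] at h2
  · intro h
    funext s m
    simp only [modelShift_apply, shiftA_apply, Pi.zero_apply]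
    by_cases hm : j ≤ (m : ℕ)
    · rw [dif_pos hm]
      exact h s _ (by simp; omega)
    · rw [dif_neg hm]

lemma range_modelShift (j : ℕ) (hj : j ≤ e) :
    LinearMap.range (modelShift R e κ j) = Tsub R e κ j := by
  ext f
  constructor
  · rintro ⟨g, rfl⟩ s i hi
    rw [modelShift_apply, shiftA_apply, dif_neg (by omega)]
  · intro hf
    refine ⟨fun s i => if h : (i : ℕ) + j < e then f s ⟨(i : ℕ) + j, h⟩ else 0, ?_⟩
    funext s m
    rw [modelShift_apply, shiftA_apply]
    by_cases hm : j ≤ (m : ℕ)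
    · rw [dif_pos hm]
      beta_reduce
      rw [dif_pos (by have := m.isLt; simp; omega)]
      congr 1
      exact Fin.ext (by simp; omega)
    · rw [dif_neg hm]
      exact (hf s m (by omega)).symm

end ModelW


section Package

lemma aux_isCompl_comap_equiv {M N : Type*} [AddCommGroup M] [Module R M]
    [AddCommGroup N] [Module R N] (Ψ : M ≃ₗ[R] N) {p q : Submodule R N} (h : IsCompl p q) :
    IsCompl (p.comap (Ψ : M →ₗ[R] N)) (q.comap (Ψ : M →ₗ[R] N)) := by
  constructor
  · rw [disjoint_iff_inf_le]
    rintro x ⟨hx1, hx2⟩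
    have h0 : Ψ x = 0 := (Submodule.disjoint_def.1 h.disjoint) _ hx1 hx2
    simpa [Submodule.mem_bot] using Ψ.map_eq_zero_iff.1 h0
  · rw [codisjoint_iff_le_sup]
    intro x _
    obtain ⟨y, hy, z, hz, hyz⟩ := Submodule.mem_sup.1 (h.sup_eq_top ▸ Submodule.mem_top (x := Ψ x))
    refine Submodule.mem_sup.2 ⟨Ψ.symm y, ?_, Ψ.symm z, ?_, ?_⟩
    · simp [Submodule.mem_comap, hy]
    · simp [Submodule.mem_comap, hz]
    · apply Ψ.injective
      simp [hyz]

noncomputable def auxComapEquiv {M N : Type*} [AddCommGroup M] [Module R M]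
    [AddCommGroup N] [Module R N] (Ψ : M ≃ₗ[R] N) (p : Submodule R N) :
    ↥(p.comap (Ψ : M →ₗ[R] N)) ≃ₗ[R] ↥p :=
  (Ψ.submoduleMap (p.comap (Ψ : M →ₗ[R] N))).trans (LinearEquiv.ofEq _ _ (by
    rw [Submodule.map_comap_eq, LinearEquiv.range, top_inf_eq]))

variable (E : Type*) [AddCommGroup E] [Module (TruncPoly R e) E] [Module R E]
  [IsScalarTower R (TruncPoly R e) E]
  [Module.Finite (TruncPoly R e) E] [Module.Free (TruncPoly R e) E]

lemma mulPi_package (he : 1 <= e) (h1 : Nat) (hrank : Module.finrank (TruncPoly R e) E = h1) :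
    Module.Finite R E /\ Module.Free R E /\ Module.finrank R E = e * h1 /\
    (forall j, j <= e -> LinearMap.range (mulPi R e E j) = LinearMap.ker (mulPi R e E (e - j))) /\
    (forall k, k <= e -> exists q : Submodule R E, IsCompl (LinearMap.ker (mulPi R e E k)) q /\
      Module.finrank R (LinearMap.ker (mulPi R e E k)) = k * h1) := by
  haveI : Nontrivial (TruncPoly R e) := truncPoly_nontrivial R e he
  set kk := Module.Free.ChooseBasisIndex (TruncPoly R e) E with hkk
  let bE := Module.Free.chooseBasis (TruncPoly R e) E
  have hcard : Fintype.card kk = h1 := by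
    rw [<- hrank, Module.finrank_eq_card_chooseBasisIndex]
  let Psi : E ≃ₗ[R] (kk -> Fin e -> R) :=
    (bE.equivFun.restrictScalars R).trans (LinearEquiv.piCongrRight fun _ => (basisA R e).equivFun)
  have hint : forall (j : Nat) (x : E), Psi (mulPi R e E j x) = modelShift R e kk j (Psi x) := by
    intro j x
    funext s
    show (basisA R e).equivFun ((bE.equivFun (piX R e ^ j • x)) s) = _
    rw [map_smul, Pi.smul_apply, smul_eq_mul, basisA_equivFun_shift]
    rfl
  have hker : forall j, j <= e -> LinearMap.ker (mulPi R e E j)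
      = (Tsub R e kk (e - j)).comap (Psi : E →ₗ[R] (kk -> Fin e -> R)) := by
    intro j hj
    ext x
    rw [LinearMap.mem_ker, Submodule.mem_comap]
    constructor
    · intro hx
      have h0 : modelShift R e kk j (Psi x) = 0 := by rw [<- hint, hx, map_zero]
      have h2 : Psi x ∈ LinearMap.ker (modelShift R e kk j) := LinearMap.mem_ker.2 h0
      rwa [ker_modelShift R e kk j hj] at h2
    · intro hx
      rw [<- ker_modelShift R e kk j hj, LinearMap.mem_ker] at hx
      have hx2 : modelShift R e kk j (Psi x) = 0 := hx
      rw [<- hint] at hx2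
      exact Psi.map_eq_zero_iff.1 hx2
  have hrange : forall j, j <= e -> LinearMap.range (mulPi R e E j)
      = (Tsub R e kk j).comap (Psi : E →ₗ[R] (kk -> Fin e -> R)) := by
    intro j hj
    ext y
    rw [Submodule.mem_comap]
    constructor
    · rintro ⟨x, rfl⟩
      have h2 : Psi (mulPi R e E j x) ∈ LinearMap.range (modelShift R e kk j) :=
        ⟨Psi x, (hint j x).symm⟩
      rwa [range_modelShift R e kk j hj] at h2
    · intro hy
      rw [<- range_modelShift R e kk j hj] at hy
      obtain ⟨g, hg⟩ := hy
      refine ⟨Psi.symm g, Psi.injective ?_⟩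
      rw [hint]
      simpa using hg
  haveI hfinE : Module.Finite R E := Module.Finite.equiv Psi.symm
  haveI hfreeE : Module.Free R E := Module.Free.of_equiv Psi.symm
  have hfr : Module.finrank R E = e * h1 := by
    rw [Psi.finrank_eq, Module.finrank_pi_fintype]
    simp [Module.finrank_pi, hcard, mul_comm]
  refine ⟨hfinE, hfreeE, hfr, fun j hj => ?_, fun k hk => ?_⟩
  · rw [hrange j hj, hker (e - j) (Nat.sub_le e j)]
    have h3 : e - (e - j) = j := by omega
    rw [h3]
  · refine ⟨(Tsub' R e kk (e - k)).comap (Psi : E →ₗ[R] (kk -> Fin e -> R)), ?_, ?_⟩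
    · rw [hker k hk]
      exact aux_isCompl_comap_equiv R Psi (isCompl_Tsub R e kk (e - k))
    · rw [hker k hk]
      rw [(auxComapEquiv R Psi (Tsub R e kk (e - k))).finrank_eq,
        (TsubEquiv R e kk (e - k) (Nat.sub_le e k)).finrank_eq,
        Module.finrank_pi, Fintype.card_prod, Fintype.card_fin, hcard]
      have h4 : e - (e - k) = k := by omega
      rw [h4, mul_comm]

end Package

end ModelA


/-- **The dual Pappas–Rapoport filtration.**
Let `R` be a commutative local ring, `e ≥ 2`, `A = R[X]/(X^e)`, `π` the image of `X`, `E` a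
finite free `A`-module of rank `h₁`, and `F^{[0]} ⊆ ⋯ ⊆ F^{[e]}` a Pappas–Rapoport
filtration of rank `d₁` on `E`, `0 < d₁ < h₁`. With `F^{[e+j]} := {x ∈ E : π^j·x ∈ F^{[e-j]}}`:
(i) `F^{[e]} ⊆ F^{[e+1]} ⊆ ⋯ ⊆ F^{[2e]} = E`;
(ii) each `F^{[e+j]}` is an `R`-module direct summand of `E`, finite free over `R` of rank
`j·h₁ + (e-j)·d₁`;
(iii) `π·F^{[e+j]} ⊆ F^{[e+j-1]}` for `1 ≤ j ≤ e`;
(iv) each quotient `F^{[e+j]}/F^{[e+j-1]}` is finite free over `R` of rank `h₁ - d₁`. -/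
theorem pappas_rapoport_dual_filtration
    (R : Type*) [CommRing R] [IsLocalRing R] (e : ℕ) (he : 2 ≤ e) (h₁ d₁ : ℕ)
    (hd : 0 < d₁) (hdh : d₁ < h₁)
    (E : Type*) [AddCommGroup E] [Module (TruncPoly R e) E] [Module R E]
    [IsScalarTower R (TruncPoly R e) E]
    [Module.Finite (TruncPoly R e) E] [Module.Free (TruncPoly R e) E]
    (hrank : Module.finrank (TruncPoly R e) E = h₁)
    (F : ℕ → Submodule R E) (hF : IsPRFiltration R e E d₁ F) :
    (PRext R e E F 0 = F e) ∧
    (∀ j < e, PRext R e E F j ≤ PRext R e E F (j + 1)) ∧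
    (PRext R e E F e = ⊤) ∧
    (∀ j, 1 ≤ j → j ≤ e →
      (∃ q : Submodule R E, IsCompl (PRext R e E F j) q) ∧
      Module.Finite R (PRext R e E F j) ∧ Module.Free R (PRext R e E F j) ∧
      Module.finrank R (PRext R e E F j) = j * h₁ + (e - j) * d₁) ∧
    (∀ j, 1 ≤ j → j ≤ e → ∀ x ∈ PRext R e E F j, piX R e • x ∈ PRext R e E F (j - 1)) ∧
    (∀ j, 1 ≤ j → j ≤ e →
      Module.Finite R (↥(PRext R e E F j) ⧸
        (PRext R e E F (j - 1)).comap (PRext R e E F j).subtype) ∧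
      Module.Free R (↥(PRext R e E F j) ⧸
        (PRext R e E F (j - 1)).comap (PRext R e E F j).subtype) ∧
      Module.finrank R (↥(PRext R e E F j) ⧸
        (PRext R e E F (j - 1)).comap (PRext R e E F j).subtype) = h₁ - d₁) := by
  obtain ⟨hF0, hFmono, hFcompl, hFquot, hFpi⟩ := hF
  have he1 : 1 ≤ e := by omega
  obtain ⟨hfinE, hfreeE, hfrE, hrange, hkerpkg⟩ := mulPi_package R e E he1 h₁ hrank
  haveI := hfinE; haveI := hfreeE
  have hπe : piX R e ^ e = 0 := piX_pow_eq_zero R e le_rfl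
  -- F is monotone
  have hFle : ∀ k, k ≤ e → ∀ i, i ≤ k → F i ≤ F k := by
    intro k
    induction k with
    | zero =>
      intro _ i hi
      have : i = 0 := by omega
      subst this; exact le_rfl
    | succ n ih =>
      intro hne i hi
      rcases Nat.eq_or_lt_of_le hi with h | h
      · subst h; exact le_rfl
      · exact (ih (by omega) i (by omega)).trans (hFmono n (by omega))
  -- F k is killed by π^k
  have hFker : ∀ k, k ≤ e → F k ≤ LinearMap.ker (mulPi R e E k) := by
    intro k
    induction k with
    | zero =>
      intro _ x hx
      rw [hF0, Submodule.mem_bot] at hx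
      subst hx
      simp
    | succ n ih =>
      intro hne x hx
      have h1 : piX R e • x ∈ F n := hFpi n (by omega) x hx
      have h2 := ih (by omega) h1
      rw [LinearMap.mem_ker] at h2 ⊢
      show piX R e ^ (n + 1) • x = 0
      have h3 : mulPi R e E n (piX R e • x) = piX R e ^ n • (piX R e • x) := rfl
      rw [h3] at h2
      rw [pow_succ, mul_smul]
      exact h2
  -- F's ranks
  have hFrank : ∀ k, k ≤ e → Module.finrank R ↥(F k) = k * d₁ := by
    intro k
    induction k with
    | zero =>
      intro _
      rw [hF0]
      simp [finrank_bot]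
    | succ n ih =>
      intro hne
      obtain ⟨q, hq⟩ := hFcompl n (by omega)
      obtain ⟨qm, hqm⟩ := hFcompl (n + 1) (by omega)
      obtain ⟨_, _, hquot⟩ := hFquot n (by omega)
      have hpm : F n ≤ F (n + 1) := hFmono n (by omega)
      obtain ⟨_, _, hsum⟩ := aux_quot_package hpm hq hqm
      rw [hsum, ih (by omega), hquot]
      ring
  -- (i) first part
  have hP0 : PRext R e E F 0 = F e := by
    ext x
    rw [PRext, Submodule.mem_comap]
    have h1 : mulPi R e E 0 x = x := by
      show piX R e ^ 0 • x = x
      rw [pow_zero, one_smul]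
    rw [h1, Nat.sub_zero]
  -- (i) monotonicity
  have hPmono : ∀ j, j < e → PRext R e E F j ≤ PRext R e E F (j + 1) := by
    intro j hj x hx
    rw [PRext, Submodule.mem_comap] at hx ⊢
    have hx' : piX R e ^ j • x ∈ F (e - j) := hx
    have h1 : e - j - 1 + 1 = e - j := by omega
    have h2 : piX R e • (piX R e ^ j • x) ∈ F (e - j - 1) :=
      hFpi (e - j - 1) (by omega) _ (by rw [h1]; exact hx')
    have h3 : e - (j + 1) = e - j - 1 := by omega
    show piX R e ^ (j + 1) • x ∈ F (e - (j + 1))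
    rw [h3, pow_succ', mul_smul]
    exact h2
  -- (i) top
  have hPtop : PRext R e E F e = ⊤ := by
    rw [eq_top_iff]
    intro x _
    rw [PRext, Submodule.mem_comap]
    show piX R e ^ e • x ∈ F (e - e)
    rw [hπe, Nat.sub_self, hF0, Submodule.mem_bot]
    exact zero_smul (TruncPoly R e) x
  -- (ii) for all 0 ≤ j ≤ e
  have hmain : ∀ j, j ≤ e → ∃ q : Submodule R E, IsCompl (PRext R e E F j) q ∧
      Module.finrank R ↥(PRext R e E F j) = j * h₁ + (e - j) * d₁ := by
    intro j hj
    obtain ⟨q', hq'⟩ := hFcompl (e - j) (Nat.sub_le e j)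
    obtain ⟨qK', hqK', hrkK'⟩ := hkerpkg (e - j) (Nat.sub_le e j)
    set Kej := LinearMap.ker (mulPi R e E (e - j)) with hKej
    have hFK : F (e - j) ≤ Kej := hFker (e - j) (Nat.sub_le e j)
    set θ : E →ₗ[R] ↥q' := (q'.projectionOnto (F (e - j)) hq'.symm).comp (mulPi R e E j)
      with hθ
    have hkerθ : LinearMap.ker θ = PRext R e E F j := by
      ext x
      rw [LinearMap.mem_ker, hθ, LinearMap.comp_apply,
        Submodule.projectionOnto_apply_eq_zero_iff]
      rw [PRext, Submodule.mem_comap]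
    set N := q' ⊓ Kej with hN
    have hNcompl : IsCompl N (F (e - j) ⊔ qK') := aux_isCompl_inf_sup hqK' hq' hFK
    obtain ⟨hNfin, hNfree⟩ := aux_summand_finite_free hNcompl
    have hrangeθ : LinearMap.range θ = N.comap q'.subtype := by
      ext y
      rw [Submodule.mem_comap]
      constructor
      · rintro ⟨x, rfl⟩
        have hyK : mulPi R e E j x ∈ Kej := by
          rw [hKej, ← hrange j hj]
          exact ⟨x, rfl⟩
        have hFpart : ((F (e - j)).projectionOnto q' hq' (mulPi R e E j x) : E) ∈ Kej :=
          hFK (SetLike.coe_mem _)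
        have h5 := Submodule.projection_add_projection_eq_self hq' (mulPi R e E j x)
        have hval : ((q'.projectionOnto (F (e - j)) hq'.symm) (mulPi R e E j x) : E)
            = mulPi R e E j x - ((F (e - j)).projectionOnto q' hq' (mulPi R e E j x) : E) :=
          eq_sub_of_add_eq' h5
        refine ⟨(θ x).2, ?_⟩
        show ((q'.projectionOnto (F (e - j)) hq'.symm) (mulPi R e E j x) : E) ∈ Kej
        rw [hval]
        exact Submodule.sub_mem _ hyK hFpart
      · intro hy
        obtain ⟨x, hx⟩ : ∃ x, mulPi R e E j x = (y : E) := by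
          have h6 : (y : E) ∈ LinearMap.range (mulPi R e E j) := by
            rw [hrange j hj]
            exact hy.2
          exact h6
        refine ⟨x, ?_⟩
        rw [hθ, LinearMap.comp_apply, hx]
        exact Submodule.projectionOnto_apply_left hq'.symm y
    have hNequiv : ↥(N.comap q'.subtype) ≃ₗ[R] ↥N := Submodule.comapSubtypeEquivOfLe inf_le_left
    let eRange : ↥(LinearMap.range θ) ≃ₗ[R] ↥N := (LinearEquiv.ofEq _ _ hrangeθ).trans hNequiv
    haveI : Module.Free R ↥(LinearMap.range θ) := Module.Free.of_equiv eRange.symm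
    obtain ⟨s, hs⟩ := Module.projective_lifting_property θ.rangeRestrict LinearMap.id
      (LinearMap.surjective_rangeRestrict θ)
    have hsid : ∀ y, θ.rangeRestrict (s y) = y := fun y => by
      have := LinearMap.ext_iff.1 hs y
      exact this
    have hcomplP : IsCompl (PRext R e E F j) (LinearMap.range s) := by
      rw [← hkerθ, ← LinearMap.ker_rangeRestrict]
      exact aux_isCompl_ker_range θ.rangeRestrict s hsid
    have hrk1 : Module.finrank R E = Module.finrank R ↥(PRext R e E F j)
        + Module.finrank R ↥(LinearMap.range s) := aux_finrank_of_isCompl hcomplP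
    have hsinj : Function.Injective s := by
      intro a b hab
      have h7 : θ.rangeRestrict (s a) = θ.rangeRestrict (s b) := by rw [hab]
      rwa [hsid, hsid] at h7
    have eS : ↥(LinearMap.range s) ≃ₗ[R] ↥N :=
      ((LinearEquiv.ofInjective s hsinj).symm).trans eRange
    have hrkS : Module.finrank R ↥(LinearMap.range s) = Module.finrank R ↥N := eS.finrank_eq
    have hrk2 : Module.finrank R ↥Kej
        = Module.finrank R ↥(F (e - j)) + Module.finrank R ↥N :=
      aux_finrank_sandwich hFK hq' hqK'
    have hrkF : Module.finrank R ↥(F (e - j)) = (e - j) * d₁ := hFrank (e - j) (Nat.sub_le e j)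
    refine ⟨LinearMap.range s, hcomplP, ?_⟩
    have E1 : e * h₁ = Module.finrank R ↥(PRext R e E F j) + Module.finrank R ↥N := by
      rw [← hfrE, hrk1, hrkS]
    have E2 : (e - j) * h₁ = (e - j) * d₁ + Module.finrank R ↥N := by
      rw [← hrkK', hrk2, hrkF]
    have E3 : j * h₁ + (e - j) * h₁ = e * h₁ := by
      rw [← add_mul]
      congr 1
      omega
    set a1 := j * h₁ with ha1
    set a2 := (e - j) * h₁ with ha2
    set a3 := (e - j) * d₁ with ha3
    set a4 := e * h₁ with ha4
    omega
  -- assemble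
  refine ⟨hP0, hPmono, hPtop, ?_, ?_, ?_⟩
  · intro j hj1 hje
    obtain ⟨q, hq, hrk⟩ := hmain j hje
    obtain ⟨hfin, hfree⟩ := aux_summand_finite_free hq
    exact ⟨⟨q, hq⟩, hfin, hfree, hrk⟩
  · intro j hj1 hje x hx
    rw [PRext, Submodule.mem_comap] at hx ⊢
    have hx' : piX R e ^ j • x ∈ F (e - j) := hx
    show piX R e ^ (j - 1) • (piX R e • x) ∈ F (e - (j - 1))
    have h1 : piX R e ^ (j - 1) • (piX R e • x) = piX R e ^ j • x := by
      have hj' : j - 1 + 1 = j := by omega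
      rw [← mul_smul, ← pow_succ, hj']
    rw [h1]
    exact hFle (e - (j - 1)) (by omega) (e - j) (by omega) hx'
  · intro j hj1 hje
    obtain ⟨j', rfl⟩ : ∃ j', j = j' + 1 := ⟨j - 1, by omega⟩
    have hj'e : j' < e := by omega
    have hpm : PRext R e E F j' ≤ PRext R e E F (j' + 1) := hPmono j' hj'e
    obtain ⟨q, hq, hrkP'⟩ := hmain j' (by omega)
    obtain ⟨qm, hqm, hrkP⟩ := hmain (j' + 1) (by omega)
    have hsimp : j' + 1 - 1 = j' := by omega
    rw [hsimp]
    obtain ⟨hfin, hfree, hsum⟩ := aux_quot_package hpm hq hqm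
    refine ⟨hfin, hfree, ?_⟩
    rw [hrkP'] at hsum
    rw [hrkP] at hsum
    have h1 : (j' + 1) * h₁ = j' * h₁ + h₁ := by ring
    have h2 : (e - j') * d₁ = (e - (j' + 1)) * d₁ + d₁ := by
      have h3 : e - j' = (e - (j' + 1)) + 1 := by omega
      rw [h3]
      ring
    set a1 := j' * h₁ with ha1
    set a2 := (j' + 1) * h₁ with ha2
    set a3 := (e - (j' + 1)) * d₁ with ha3
    set a4 := (e - j') * d₁ with ha4
    omega
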